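/- Assume β² + γ_N λ > 0 and let δ^± = −β ± √(β² + γ_N λ), so that δ⁻ − cγ_N < 0. Let K be a C¹ solution on [0,T] of the Riccati terminal value problem K'(t) = 2βK(t) + γ_N K(t)² − λ with K(T) = c. If 2βc + γ_N c² − λ > 0 (so K is increasing on [0,T]), then K(0) ≥ (−λ − cδ⁺)/(δ⁻ − cγ_N); if 2βc + γ_N c² − λ < 0 (so K is decreasing on [0,T]), then K(0) ≤ (−λ − cδ⁺)/(δ⁻ − cγ_N). -/

import Mathlib

open Set

set_option maxHeartbeats 1000000 in
/-- With `δ^± = −β ± √(β² + γ_N λ)` (assuming `β² + γ_N λ > 0`, so that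
`δ⁻ − cγ_N < 0`), for a C¹ solution `K` of the Riccati terminal value problem:
if `2βc + γ_N c² − λ > 0` (K increasing) then `K(0) ≥ (−λ − cδ⁺)/(δ⁻ − cγ_N)`;
if `2βc + γ_N c² − λ < 0` (K decreasing) then `K(0) ≤ (−λ − cδ⁺)/(δ⁻ − cγ_N)`. -/
theorem riccati_initial_value_bound
    (N : ℕ) (hN : 2 ≤ N) (T a q ε c : ℝ)
    (hT : 0 < T) (ha : 0 ≤ a) (hq : 0 ≤ q) (hc : 0 ≤ c) (hqε : q ^ 2 ≤ ε)
    (β γN lam δplus δminus : ℝ)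
    (hβ : β = a + (1 - 1 / (N : ℝ)) * q)
    (hγ : γN = (1 - 1 / (N : ℝ)) ^ 2)
    (hlam : lam = ε - q ^ 2)
    (hR : 0 < β ^ 2 + γN * lam)
    (hδp : δplus = -β + Real.sqrt (β ^ 2 + γN * lam))
    (hδm : δminus = -β - Real.sqrt (β ^ 2 + γN * lam))
    (K : ℝ → ℝ)
    (hK : ∀ t ∈ Icc (0 : ℝ) T, HasDerivAt K (2 * β * K t + γN * K t ^ 2 - lam) t)
    (hKT : K T = c) :
    δminus - c * γN < 0 ∧
    (0 < 2 * β * c + γN * c ^ 2 - lam →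
      (-lam - c * δplus) / (δminus - c * γN) ≤ K 0) ∧
    (2 * β * c + γN * c ^ 2 - lam < 0 →
      K 0 ≤ (-lam - c * δplus) / (δminus - c * γN)) := by
  have hNR : (2:ℝ) ≤ (N:ℝ) := by exact_mod_cast hN
  have h1N : 0 < 1 - 1/(N:ℝ) := by
    rw [sub_pos, div_lt_one (by linarith)]; linarith
  have hγpos : 0 < γN := by rw [hγ]; positivity
  have hβ0 : 0 ≤ β := by
    have := mul_nonneg h1N.le hq; rw [hβ]; linarith
  have hs0 : 0 < Real.sqrt (β ^ 2 + γN * lam) := Real.sqrt_pos.mpr hR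
  have hs2 : Real.sqrt (β ^ 2 + γN * lam) ^ 2 = β ^ 2 + γN * lam := Real.sq_sqrt hR.le
  have hδm0 : δminus < 0 := by rw [hδm]; linarith
  have hden : δminus - c * γN < 0 := by nlinarith [mul_nonneg hc hγpos.le]
  have hprod : δplus * δminus = -(γN * lam) := by
    rw [hδp, hδm]; nlinarith [hs2]
  have hsum : δplus + δminus = -(2 * β) := by rw [hδp, hδm]; ring
  set r := δplus / γN with hr
  have hM : (-lam - c * δplus) / (δminus - c * γN) = r := by
    rw [hr, div_eq_div_iff hden.ne hγpos.ne']
    linarith [hprod]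
  have hfr : 2 * β * r + γN * r ^ 2 - lam = 0 := by
    rw [hr]; field_simp
    linear_combination δplus*hsum - hprod
  have hfx : ∀ x : ℝ, 2 * β * x + γN * x ^ 2 - lam
      = (x - r) * (2 * β + γN * (x + r)) := by
    intro x; linear_combination hfr
  have hfx2 : 2 * β * c + γN * c ^ 2 - lam = γN * (c - r) * (c - δminus / γN) := by
    rw [hr]; field_simp
    linear_combination c*γN*hsum - hprod
  have hKc : ContinuousOn K (Icc 0 T) := fun t ht =>
    (hK t ht).continuousAt.continuousWithinAt
  -- no solution can touch the fixed point r unless c = r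
  have hnocross : ∀ t₀ ∈ Icc (0:ℝ) T, K t₀ = r → c = r := by
    intro t₀ ht₀ hKt₀
    have hcont : ContinuousOn (fun t => 2 * β + γN * (K t + r)) (Icc 0 T) :=
      continuousOn_const.add (continuousOn_const.mul (hKc.add continuousOn_const))
    obtain ⟨L, hL⟩ := isCompact_Icc.exists_bound_of_continuousOn hcont
    have hsub : Icc t₀ T ⊆ Icc 0 T := Icc_subset_Icc ht₀.1 le_rfl
    have hsub' : Ico t₀ T ⊆ Icc 0 T := fun x hx => ⟨ht₀.1.trans hx.1, hx.2.le⟩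
    have hg := norm_le_gronwallBound_of_norm_deriv_right_le
      (f := fun t => K t - r) (f' := fun t => 2 * β * K t + γN * K t ^ 2 - lam)
      (a := t₀) (b := T) (δ := 0) (K := L) (ε := 0)
      ((hKc.mono hsub).sub continuousOn_const)
      (fun x hx => ((hK x (hsub' hx)).sub_const r).hasDerivWithinAt)
      (by simp [hKt₀])
      (by
        intro x hx
        show ‖2 * β * K x + γN * K x ^ 2 - lam‖ ≤ L * ‖K x - r‖ + 0
        rw [hfx (K x), Real.norm_eq_abs, abs_mul, add_zero]
        have h1 := hL x (hsub' hx)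
        have h2 : (0:ℝ) ≤ |K x - r| := abs_nonneg _
        rw [Real.norm_eq_abs] at h1 ⊢
        calc |K x - r| * |2 * β + γN * (K x + r)| ≤ |K x - r| * L :=
              mul_le_mul_of_nonneg_left h1 h2
          _ = L * |K x - r| := mul_comm _ _)
    have hgT := hg T ⟨ht₀.2, le_rfl⟩
    rw [gronwallBound_ε0_δ0] at hgT
    have : K T - r = 0 := by
      have := norm_nonneg (K T - r); have := abs_nonneg (K T - r)
      rw [Real.norm_eq_abs] at hgT
      have := abs_eq_zero.mp (le_antisymm hgT (abs_nonneg _))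
      exact this
    rw [hKT] at this; linarith
  have hrm : δminus / γN < 0 := div_neg_of_neg_of_pos hδm0 hγpos
  refine ⟨hden, ?_, ?_⟩
  · intro hpos
    rw [hM]
    by_contra hlt
    push_neg at hlt
    have hcr : r < c := by
      rw [hfx2] at hpos
      have h2 : 0 < c - δminus / γN := by linarith
      nlinarith [mul_pos hγpos h2]
    have hmem : r ∈ Icc (K 0) (K T) := ⟨hlt.le, by rw [hKT]; exact hcr.le⟩
    obtain ⟨t, ht, hKt⟩ := intermediate_value_Icc hT.le hKc hmem
    exact hcr.ne' (hnocross t ht hKt)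
  · intro hneg
    rw [hM]
    by_contra hlt
    push_neg at hlt
    have hcr : c < r := by
      rw [hfx2] at hneg
      have h2 : 0 < c - δminus / γN := by linarith
      nlinarith [mul_pos hγpos h2]
    have hmem : r ∈ Icc (K T) (K 0) := ⟨by rw [hKT]; exact hcr.le, hlt.le⟩
    obtain ⟨t, ht, hKt⟩ := intermediate_value_Icc' hT.le hKc hmem
    exact hcr.ne (hnocross t ht hKt)
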